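/- arXiv:1403.4571 — 2 statements merged into one kernel-verified Lean document; each statement's English description precedes it below -/
import Mathlib

section
/- Let A_0, A_1, ..., A_n be nonzero pairwise distinct complex numbers and let x be a nonzero complex number with A_i x ≠ 1 for all i. Then (A_0 x/(1-A_0 x))^2 · ∏_{j=1}^n A_j x/(1-A_j x) = ∑_{i=1}^n (A_0/(A_i-A_0))^2 · (∏_{1≤j≤n, j≠i} A_j/(A_i-A_j)) · A_i x/(1-A_i x) + (∏_{i=1}^n A_i/(A_0-A_i)) · [ A_0 x/(1-A_0 x)^2 + (∑_{l=1}^n A_0/(A_l-A_0) − 1) · A_0 x/(1-A_0 x) ]. -/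
open Finset

set_option maxHeartbeats 2000000

private lemma uu (a b x : ℂ) (ha : 1 - a*x ≠ 0) (hb : 1 - b*x ≠ 0) (hab : a - b ≠ 0) :
    (a*x/(1-a*x)) * (b*x/(1-b*x))
      = (b/(a-b)) * (a*x/(1-a*x)) + (a/(b-a)) * (b*x/(1-b*x)) := by
  have hba : b - a ≠ 0 := fun h => hab (by linear_combination -h)
  have hb' : 1 - x*b ≠ 0 := by rwa [mul_comm]
  field_simp
  ring

private lemma uu' (a b x : ℂ) (ha : 1 - a*x ≠ 0) (hb : 1 - b*x ≠ 0) (hba : b - a ≠ 0) :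
    (a*x/(1-a*x)) * (b*x/(1-b*x))
      = -((b/(b-a)) * (a*x/(1-a*x))) + (a/(b-a)) * (b*x/(1-b*x)) := by
  have hb' : 1 - x*b ≠ 0 := by rwa [mul_comm]
  field_simp
  ring

private lemma vv (a b x : ℂ) (ha : 1 - a*x ≠ 0) (hb : 1 - b*x ≠ 0) (hba : b - a ≠ 0) :
    (a*x/(1-a*x)^2) * (b*x/(1-b*x))
      = (a*b/(b-a)^2) * (b*x/(1-b*x)) - (b/(b-a)) * (a*x/(1-a*x)^2)
        - (b/(b-a))*(a/(b-a))*(a*x/(1-a*x)) := by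
  rw [eq_sub_iff_add_eq, eq_sub_iff_add_eq, div_mul_div_comm, div_mul_div_comm,
    div_mul_div_comm, div_mul_div_comm, div_mul_div_comm, div_add_div, div_add_div,
    div_eq_div_iff]
  · ring
  all_goals apply_rules [mul_ne_zero, pow_ne_zero] <;> simp [npowRec]

private lemma scalar (a b x s : ℂ) (ha : 1 - a*x ≠ 0) (hb : 1 - b*x ≠ 0) (hab : a - b ≠ 0) :
    (a*x/(1-a*x)^2 + (s-1)*(a*x/(1-a*x))) * (b*x/(1-b*x))
      = (a*b/(b-a)^2 + (s-1)*(a/(b-a))) * (b*x/(1-b*x))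
        + (b/(a-b)) * (a*x/(1-a*x)^2 + (s + a/(b-a) - 1)*(a*x/(1-a*x))) := by
  have hba : b - a ≠ 0 := fun h => hab (by linear_combination -h)
  rw [show a - b = -(b-a) by ring, div_neg]
  linear_combination (s-1) * uu' a b x ha hb hba + vv a b x ha hb hba

private lemma sq1 (a x : ℂ) (ha : 1 - a*x ≠ 0) :
    (a*x/(1-a*x))^2 = a*x/(1-a*x)^2 - a*x/(1-a*x) := by
  rw [div_pow, eq_sub_iff_add_eq, div_add_div _ _ (pow_ne_zero 2 ha) ha,
    div_eq_div_iff (mul_ne_zero (pow_ne_zero 2 ha) ha) (pow_ne_zero 2 ha)]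
  ring

private lemma sq2 (a c : ℂ) (hca : c - a ≠ 0) :
    (a/(c-a))^2 = a*c/(c-a)^2 - a/(c-a) := by
  rw [div_pow, eq_sub_iff_add_eq, div_add_div _ _ (pow_ne_zero 2 hca) hca,
    div_eq_div_iff (mul_ne_zero (pow_ne_zero 2 hca) hca) (pow_ne_zero 2 hca)]
  ring

private lemma conv1 (b c : ℂ) (hb : b ≠ 0) (hbc : b - c ≠ 0) :
    c * b⁻¹ / (1 - c * b⁻¹) = c / (b - c) := by
  have h1 : 1 - c * b⁻¹ = (b - c) * b⁻¹ := by field_simp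
  rw [h1, mul_div_mul_right _ _ (inv_ne_zero hb)]

private lemma conv2 (b c : ℂ) (hb : b ≠ 0) (hbc : b - c ≠ 0) :
    c * b⁻¹ / (1 - c * b⁻¹)^2 = c * b / (b - c)^2 := by
  have h1 : 1 - c * b⁻¹ = (b - c) * b⁻¹ := by field_simp
  rw [h1]
  field_simp

private theorem key (n : ℕ) : ∀ (x : ℂ) (A : ℕ → ℂ),
    1 ≤ n → x ≠ 0 → (∀ i ≤ n, A i ≠ 0) → (∀ i ≤ n, A i * x ≠ 1) →
    (∀ i ≤ n, ∀ j ≤ n, i ≠ j → A i ≠ A j) →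
    (A 0 * x / (1 - A 0 * x)) ^ 2 * ∏ j ∈ Icc 1 n, A j * x / (1 - A j * x)
      = (∑ i ∈ Icc 1 n, (A 0 / (A i - A 0)) ^ 2 *
          (∏ j ∈ (Icc 1 n).erase i, A j / (A i - A j)) * (A i * x / (1 - A i * x)))
        + (∏ i ∈ Icc 1 n, A i / (A 0 - A i)) *
          (A 0 * x / (1 - A 0 * x) ^ 2 +
            ((∑ l ∈ Icc 1 n, A 0 / (A l - A 0)) - 1) * (A 0 * x / (1 - A 0 * x))) := by
  induction n with
  | zero => intro x A h; omega
  | succ n ih =>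
    intro x A _ hx hA0 hAx hAA
    have hax : ∀ i ≤ n+1, 1 - A i * x ≠ 0 := fun i hi h =>
      hAx i hi (by linear_combination -h)
    rcases Nat.eq_zero_or_pos n with rfl | hn
    · -- base case n + 1 = 1
      have hac : A 0 - A 1 ≠ 0 := sub_ne_zero.mpr (hAA 0 (by omega) 1 (by omega) (by omega))
      have hca : A 1 - A 0 ≠ 0 := fun h => hac (by linear_combination -h)
      simp only [Icc_self, sum_singleton, prod_singleton, erase_singleton, prod_empty]
      linear_combination scalar (A 0) (A 1) x 0 (hax 0 (by omega)) (hax 1 (by omega)) hac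
        + (A 1*x/(1-A 1*x)) * sq1 (A 0) x (hax 0 (by omega))
        - (A 1*x/(1-A 1*x)) * sq2 (A 0) (A 1) hca
    · -- inductive step
      have hb0 : A (n+1) ≠ 0 := hA0 (n+1) le_rfl
      have h0b : A 0 - A (n+1) ≠ 0 :=
        sub_ne_zero.mpr (hAA 0 (by omega) (n+1) le_rfl (by omega))
      have hb0' : A (n+1) - A 0 ≠ 0 := fun h => h0b (by linear_combination -h)
      have hib : ∀ i ∈ Icc 1 n, A i - A (n+1) ≠ 0 := by
        intro i hi
        have hi' := mem_Icc.mp hi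
        exact sub_ne_zero.mpr (hAA i (by omega) (n+1) le_rfl (by omega))
      have hib' : ∀ i ∈ Icc 1 n, A (n+1) - A i ≠ 0 := fun i hi h =>
        hib i hi (by linear_combination -h)
      -- IH at x
      have ih1 := ih x A hn hx (fun i hi => hA0 i (by omega)) (fun i hi => hAx i (by omega))
        (fun i hi j hj hij => hAA i (by omega) j (by omega) hij)
      -- IH at (A (n+1))⁻¹
      have hAxb : ∀ i ≤ n, A i * (A (n+1))⁻¹ ≠ 1 := by
        intro i hi h
        apply hAA i (by omega) (n+1) le_rfl (by omega)
        field_simp at h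
        exact h
      have ih2 := ih (A (n+1))⁻¹ A hn (inv_ne_zero hb0) (fun i hi => hA0 i (by omega)) hAxb
        (fun i hi j hj hij => hAA i (by omega) j (by omega) hij)
      rw [conv1 (A (n+1)) (A 0) hb0 hb0', conv2 (A (n+1)) (A 0) hb0 hb0'] at ih2
      rw [show (∏ j ∈ Icc 1 n, A j * (A (n+1))⁻¹ / (1 - A j * (A (n+1))⁻¹))
            = ∏ j ∈ Icc 1 n, A j / (A (n+1) - A j) from
          prod_congr rfl (fun j hj => conv1 (A (n+1)) (A j) hb0 (hib' j hj))] at ih2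
      rw [show (∑ i ∈ Icc 1 n, (A 0 / (A i - A 0)) ^ 2 *
              (∏ j ∈ (Icc 1 n).erase i, A j / (A i - A j)) *
              (A i * (A (n+1))⁻¹ / (1 - A i * (A (n+1))⁻¹)))
            = ∑ i ∈ Icc 1 n, (A 0 / (A i - A 0)) ^ 2 *
              (∏ j ∈ (Icc 1 n).erase i, A j / (A i - A j)) * (A i / (A (n+1) - A i)) from
          sum_congr rfl (fun i hi => by rw [conv1 (A (n+1)) (A i) hb0 (hib' i hi)])] at ih2
      -- rewrite the goal
      rw [prod_Icc_succ_top (by omega), prod_Icc_succ_top (by omega),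
        sum_Icc_succ_top (by omega), sum_Icc_succ_top (by omega)]
      have her2 : (Icc 1 (n+1)).erase (n+1) = Icc 1 n := by
        ext j; simp only [mem_erase, mem_Icc]; omega
      rw [her2]
      rw [show (∑ i ∈ Icc 1 n, (A 0 / (A i - A 0)) ^ 2 *
              (∏ j ∈ (Icc 1 (n+1)).erase i, A j / (A i - A j)) * (A i * x / (1 - A i * x)))
            = ∑ i ∈ Icc 1 n, (A 0 / (A i - A 0)) ^ 2 *
              ((∏ j ∈ (Icc 1 n).erase i, A j / (A i - A j)) * (A (n+1) / (A i - A (n+1)))) *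
              (A i * x / (1 - A i * x)) from
          sum_congr rfl (fun i hi => by
            have hi' := mem_Icc.mp hi
            have hins : (Icc 1 (n+1)).erase i = insert (n+1) ((Icc 1 n).erase i) := by
              ext j; simp only [mem_erase, mem_Icc, mem_insert]; omega
            have hnot : (n+1) ∉ (Icc 1 n).erase i := by
              simp only [mem_erase, mem_Icc]; omega
            rw [hins, prod_insert hnot]
            ring)]
      -- split the product of the old sum with the new factor
      have hsplit : (∑ i ∈ Icc 1 n, (A 0 / (A i - A 0)) ^ 2 *
              (∏ j ∈ (Icc 1 n).erase i, A j / (A i - A j)) * (A i * x / (1 - A i * x))) *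
            (A (n+1) * x / (1 - A (n+1) * x))
          = (∑ i ∈ Icc 1 n, (A 0 / (A i - A 0)) ^ 2 *
              ((∏ j ∈ (Icc 1 n).erase i, A j / (A i - A j)) * (A (n+1) / (A i - A (n+1)))) *
              (A i * x / (1 - A i * x)))
            + (∑ i ∈ Icc 1 n, (A 0 / (A i - A 0)) ^ 2 *
              (∏ j ∈ (Icc 1 n).erase i, A j / (A i - A j)) * (A i / (A (n+1) - A i))) *
              (A (n+1) * x / (1 - A (n+1) * x)) := by
        rw [sum_mul, sum_mul, ← sum_add_distrib]
        refine sum_congr rfl fun i hi => ?_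
        have hi' := mem_Icc.mp hi
        linear_combination ((A 0 / (A i - A 0)) ^ 2 *
            (∏ j ∈ (Icc 1 n).erase i, A j / (A i - A j))) *
          uu (A i) (A (n+1)) x (hax i (by omega)) (hax (n+1) le_rfl) (hib i hi)
      linear_combination (A (n+1) * x / (1 - A (n+1) * x)) * ih1 + hsplit
        - (A (n+1) * x / (1 - A (n+1) * x)) * ih2
        + (∏ i ∈ Icc 1 n, A i / (A 0 - A i)) *
          scalar (A 0) (A (n+1)) x (∑ l ∈ Icc 1 n, A 0 / (A l - A 0))
            (hax 0 (by omega)) (hax (n+1) le_rfl) h0b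

theorem stmt3 (n : ℕ) (hn : 1 ≤ n) (x : ℂ) (A : ℕ → ℂ)
    (hx : x ≠ 0) (hA0 : ∀ i ≤ n, A i ≠ 0)
    (hAx : ∀ i ≤ n, A i * x ≠ 1)
    (hAA : ∀ i ≤ n, ∀ j ≤ n, i ≠ j → A i ≠ A j) :
    (A 0 * x / (1 - A 0 * x)) ^ 2 * ∏ j ∈ Icc 1 n, A j * x / (1 - A j * x)
      = (∑ i ∈ Icc 1 n, (A 0 / (A i - A 0)) ^ 2 *
          (∏ j ∈ (Icc 1 n).erase i, A j / (A i - A j)) * (A i * x / (1 - A i * x)))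
        + (∏ i ∈ Icc 1 n, A i / (A 0 - A i)) *
          (A 0 * x / (1 - A 0 * x) ^ 2 +
            ((∑ l ∈ Icc 1 n, A 0 / (A l - A 0)) - 1) * (A 0 * x / (1 - A 0 * x))) := by
  exact key n x A hn hx hA0 hAx hAA
end

section
/- In the twisted group algebra ℂ[Γ̄] with basis elements w(ρ_1,...,ρ_ν) as above, for 1 ≤ j ≤ ⌊ν/2⌋: e^{\overline{ε_{2j-1} − ε_{2j}}} · w(ρ_1,...,ρ_ν) = −i·ρ_{2j-1}ρ_{2j} · w(ρ_1,...,ρ_ν), and e^{\overline{ε_{2j} − ε_{2j+1}}} · w(ρ_1,...,ρ_ν) = −i·ρ_{2j}ρ_{2j+1} · w(ρ_1,...,ρ_{2j-1}, −ρ_{2j}, −ρ_{2j+1}, ρ_{2j+2},...,ρ_ν). In particular each w(ρ_1,...,ρ_ν) is an eigenvector of e^{\overline{ε_{2j-1} − ε_{2j}}} with eigenvalue −i ρ_{2j-1} ρ_{2j}. -/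
open Finset

/-- The bimultiplicative two-cocycle `ε` on `Γ = ℤ^ν`, with
`ε(ε_i, ε_j) = 1` if `i ≤ j` and `−1` if `i > j`. -/
noncomputable def eps (ν : ℕ) (α β : Fin ν → ℤ) : ℂ :=
  ∏ i, ∏ j, (if i ≤ j then (1 : ℂ) else -1) ^ (α i * β j)

/-- The image `ε̄_j` of the `j`-th standard basis vector in `Γ/2Γ = (ℤ/2)^ν`. -/
def uvec (ν : ℕ) (j : Fin ν) : Fin ν → ZMod 2 := fun i => if i = j then 1 else 0

/-- `w_j(ρ)`: with 0-based indexing, `w_j(ρ) = 1 + iρ e^{ε̄_j}` for `j` in an odd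
(1-based) position and `1 + ρ e^{ε̄_j}` for `j` in an even (1-based) position. -/
noncomputable def wfac (ν : ℕ) (A : Type) [Ring A] [Algebra ℂ A]
    (e : (Fin ν → ZMod 2) → A) (j : Fin ν) (r : ℂ) : A :=
  if (j : ℕ) % 2 = 0 then 1 + (Complex.I * r) • e (uvec ν j)
  else 1 + r • e (uvec ν j)

/-- `w(ρ_1,…,ρ_ν) = ∏_{j=1}^ν w_j(ρ_j)`, the product taken in increasing order. -/
noncomputable def wprod (ν : ℕ) (A : Type) [Ring A] [Algebra ℂ A]
    (e : (Fin ν → ZMod 2) → A) (ρ : Fin ν → ℂ) : A :=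
  (List.ofFn fun j => wfac ν A e j (ρ j)).prod

/-! ### Auxiliary lemmas -/

lemma eps_single (ν : ℕ) (p q : Fin ν) :
    eps ν (fun t => if t = p then 1 else 0) (fun t => if t = q then 1 else 0)
      = if p ≤ q then 1 else -1 := by
  unfold eps
  rw [Finset.prod_eq_single p ?_ (by simp), Finset.prod_eq_single q ?_ (by simp)]
  · simp
  · intro b _ hb; simp [hb]
  · intro b _ hb; simp [hb]

section AuxE
variable {ν : ℕ} {A : Type} [Ring A] [Algebra ℂ A] (e : (Fin ν → ZMod 2) → A)

lemma e_mul_e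
    (hmul : ∀ α β : Fin ν → ℤ,
      e (fun i => (α i : ZMod 2)) * e (fun i => (β i : ZMod 2))
        = eps ν α β • e (fun i => ((α i + β i : ℤ) : ZMod 2)))
    (p q : Fin ν) :
    e (uvec ν p) * e (uvec ν q)
      = (if p ≤ q then (1:ℂ) else -1) • e (fun i => uvec ν p i + uvec ν q i) := by
  have h := hmul (fun t => if t = p then 1 else 0) (fun t => if t = q then 1 else 0)
  rw [eps_single] at h
  have h1 : (fun i => (((if i = p then (1:ℤ) else 0) : ℤ) : ZMod 2)) = uvec ν p := by
    funext i; by_cases hi : i = p <;> simp [uvec, hi]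
  have h2 : (fun i => (((if i = q then (1:ℤ) else 0) : ℤ) : ZMod 2)) = uvec ν q := by
    funext i; by_cases hi : i = q <;> simp [uvec, hi]
  have h3 : (fun i => ((((if i = p then (1:ℤ) else 0) + (if i = q then 1 else 0) : ℤ)) : ZMod 2))
      = fun i => uvec ν p i + uvec ν q i := by
    funext i; by_cases hi : i = p <;> by_cases hj : i = q <;> simp [uvec, hi, hj]
  rwa [h1, h2, h3] at h

lemma e_sq (hone : e 0 = 1)
    (hmul : ∀ α β : Fin ν → ℤ,
      e (fun i => (α i : ZMod 2)) * e (fun i => (β i : ZMod 2))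
        = eps ν α β • e (fun i => ((α i + β i : ℤ) : ZMod 2)))
    (p : Fin ν) : e (uvec ν p) * e (uvec ν p) = 1 := by
  have h := e_mul_e e hmul p p
  simp only [le_refl, if_true, one_smul] at h
  have h2 : (fun i => uvec ν p i + uvec ν p i) = (0 : Fin ν → ZMod 2) := by
    funext i
    have : ∀ x : ZMod 2, x + x = 0 := by decide
    simp [this]
  rw [h, h2, hone]

lemma e_anticomm
    (hmul : ∀ α β : Fin ν → ℤ,
      e (fun i => (α i : ZMod 2)) * e (fun i => (β i : ZMod 2))
        = eps ν α β • e (fun i => ((α i + β i : ℤ) : ZMod 2)))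
    (p q : Fin ν) (hpq : p ≠ q) :
    e (uvec ν q) * e (uvec ν p) = -(e (uvec ν p) * e (uvec ν q)) := by
  rw [e_mul_e e hmul p q, e_mul_e e hmul q p]
  have hc : (fun i => uvec ν q i + uvec ν p i) = fun i => uvec ν p i + uvec ν q i := by
    funext i; ring
  rw [hc]
  rcases lt_or_gt_of_ne hpq with h | h
  · rw [if_pos h.le, if_neg (not_le.mpr h)]; simp
  · rw [if_neg (not_le.mpr h), if_pos h.le]; simp

end AuxE

lemma split3 {A : Type} [Monoid A] (p m : ℕ) (F : Fin (p + 2 + m) → A) :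
    (List.ofFn F).prod
      = (List.ofFn fun j : Fin p => F ⟨j, by omega⟩).prod
        * (F ⟨p, by omega⟩ * F ⟨p + 1, by omega⟩)
        * (List.ofFn fun j : Fin m => F ⟨p + 2 + j, by omega⟩).prod := by
  rw [List.ofFn_add (f := F), List.prod_append,
    List.ofFn_add (f := fun i : Fin (p + 2) => F (Fin.castLE (Nat.le_add_right (p + 2) m) i)), List.prod_append]
  simp only [List.ofFn_succ, List.ofFn_zero, List.prod_cons, List.prod_nil, mul_one]
  rfl

section Pair
variable {A : Type} [Ring A] [Algebra ℂ A]

lemma pair1 (x y : A) (hx : x * x = 1) (hy : y * y = 1) (hyx : y * x = -(x * y))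
    (r r' : ℂ) (hr : r * r = 1) (hr' : r' * r' = 1) :
    (x * y) * ((1 + (Complex.I * r) • x) * (1 + r' • y))
      = (-Complex.I * r * r') • ((1 + (Complex.I * r) • x) * (1 + r' • y)) := by
  have h1 : x * y * x = -y := by
    rw [mul_assoc, hyx, mul_neg, ← mul_assoc, hx, one_mul]
  have h2 : x * y * y = x := by rw [mul_assoc, hy, mul_one]
  have h3 : x * y * (x * y) = -1 := by
    rw [← mul_assoc, h1, neg_mul, hy]
  have hI := Complex.I_mul_I
  simp only [mul_add, add_mul, mul_one, one_mul, mul_smul_comm, smul_mul_assoc, smul_smul,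
    h1, h2, h3]
  match_scalars
  · linear_combination (r*r*r'*r')*hI + (-1)*hr + (-(r*r))*hr'
  · linear_combination (Complex.I*r)*hr'
  · linear_combination (r*r*r')*hI + (-r')*hr
  · ring

lemma pair2 (x y : A) (hx : x * x = 1) (hy : y * y = 1) (hyx : y * x = -(x * y))
    (r r' : ℂ) (hr : r * r = 1) (hr' : r' * r' = 1) :
    (x * y) * ((1 + r • x) * (1 + (Complex.I * r') • y))
      = (-Complex.I * r * r') • ((1 + (-r) • x) * (1 + (Complex.I * -r') • y)) := by
  have h1 : x * y * x = -y := by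
    rw [mul_assoc, hyx, mul_neg, ← mul_assoc, hx, one_mul]
  have h2 : x * y * y = x := by rw [mul_assoc, hy, mul_one]
  have h3 : x * y * (x * y) = -1 := by
    rw [← mul_assoc, h1, neg_mul, hy]
  have hI := Complex.I_mul_I
  simp only [mul_add, add_mul, mul_one, one_mul, mul_smul_comm, smul_mul_assoc, smul_smul,
    h1, h2, h3]
  match_scalars
  · linear_combination (r*r*r'*r')*hI + (-1)*hr + (-(r*r))*hr'
  · linear_combination (-(r*r'*r'))*hI + r*hr'
  · linear_combination (-(Complex.I*r'))*hr
  · ring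

end Pair

lemma assemble {A : Type} [Ring A] [Algebra ℂ A] (g P1 P2 Q Q' P1' P2' : A) (c : ℂ)
    (h1 : g * P1 = P1 * g) (hQ : g * Q = c • Q') (hP1 : P1' = P1) (hP2 : P2' = P2) :
    g * (P1 * Q * P2) = c • (P1' * Q' * P2') := by
  rw [hP1, hP2, ← mul_assoc, ← mul_assoc, h1, mul_assoc P1, hQ, mul_smul_comm, smul_mul_assoc]

lemma key' (p m : ℕ) (A : Type) [Ring A] [Algebra ℂ A]
    (e : (Fin (p + 2 + m) → ZMod 2) → A) (g : A)
    (ρ σ : Fin (p + 2 + m) → ℂ) (c : ℂ)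
    (hcomm : ∀ j : Fin (p + 2 + m), (j : ℕ) ≠ p → (j : ℕ) ≠ p + 1 → ∀ r : ℂ,
      g * wfac (p + 2 + m) A e j r = wfac (p + 2 + m) A e j r * g)
    (hσ : ∀ j : Fin (p + 2 + m), (j : ℕ) ≠ p → (j : ℕ) ≠ p + 1 → σ j = ρ j)
    (hpair : g * (wfac (p + 2 + m) A e ⟨p, by omega⟩ (ρ ⟨p, by omega⟩)
          * wfac (p + 2 + m) A e ⟨p + 1, by omega⟩ (ρ ⟨p + 1, by omega⟩))
        = c • (wfac (p + 2 + m) A e ⟨p, by omega⟩ (σ ⟨p, by omega⟩)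
          * wfac (p + 2 + m) A e ⟨p + 1, by omega⟩ (σ ⟨p + 1, by omega⟩))) :
    g * wprod (p + 2 + m) A e ρ = c • wprod (p + 2 + m) A e σ := by
  unfold wprod
  rw [split3 p m (F := fun j => wfac (p + 2 + m) A e j (ρ j)),
    split3 p m (F := fun j => wfac (p + 2 + m) A e j (σ j))]
  have hσ1 : (List.ofFn fun j : Fin p =>
        wfac (p + 2 + m) A e ⟨j, by omega⟩ (σ ⟨j, by omega⟩)).prod
      = (List.ofFn fun j : Fin p =>
        wfac (p + 2 + m) A e ⟨j, by omega⟩ (ρ ⟨j, by omega⟩)).prod := by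
    apply congrArg List.prod; apply congrArg List.ofFn; funext j
    rw [hσ ⟨j, by omega⟩ (show (j : ℕ) ≠ p by omega) (show (j : ℕ) ≠ p + 1 by omega)]
  have hσ2 : (List.ofFn fun j : Fin m =>
        wfac (p + 2 + m) A e ⟨p + 2 + j, by omega⟩ (σ ⟨p + 2 + j, by omega⟩)).prod
      = (List.ofFn fun j : Fin m =>
        wfac (p + 2 + m) A e ⟨p + 2 + j, by omega⟩ (ρ ⟨p + 2 + j, by omega⟩)).prod := by
    apply congrArg List.prod; apply congrArg List.ofFn; funext j
    rw [hσ ⟨p + 2 + j, by omega⟩ (show p + 2 + (j : ℕ) ≠ p by omega)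
      (show p + 2 + (j : ℕ) ≠ p + 1 by omega)]
  have hgP1 : g * (List.ofFn fun j : Fin p =>
        wfac (p + 2 + m) A e ⟨j, by omega⟩ (ρ ⟨j, by omega⟩)).prod
      = (List.ofFn fun j : Fin p =>
        wfac (p + 2 + m) A e ⟨j, by omega⟩ (ρ ⟨j, by omega⟩)).prod * g := by
    refine (Commute.list_prod_right _ g ?_).eq
    intro x hx
    rw [List.mem_ofFn] at hx
    obtain ⟨j, rfl⟩ := hx
    exact hcomm ⟨j, by omega⟩ (show (j : ℕ) ≠ p by omega)
      (show (j : ℕ) ≠ p + 1 by omega) _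
  exact assemble _ _ _ _ _ _ _ _ hgP1 hpair hσ1 hσ2

lemma comm_aux {A : Type} [Ring A] (x y z : A)
    (hxz : x * z = -(z * x)) (hyz : y * z = -(z * y)) : (x * y) * z = z * (x * y) := by
  calc x * y * z = x * (y * z) := mul_assoc _ _ _
    _ = x * (-(z * y)) := by rw [hyz]
    _ = -((x * z) * y) := by rw [mul_neg, ← mul_assoc]
    _ = -((-(z * x)) * y) := by rw [hxz]
    _ = z * (x * y) := by rw [neg_mul, neg_neg, mul_assoc]

lemma comm_wfac {ν : ℕ} {A : Type} [Ring A] [Algebra ℂ A] (e : (Fin ν → ZMod 2) → A)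
    (g : A) (j : Fin ν) (r : ℂ) (h : g * e (uvec ν j) = e (uvec ν j) * g) :
    g * wfac ν A e j r = wfac ν A e j r * g := by
  unfold wfac; split_ifs <;>
    rw [mul_add, add_mul, mul_one, one_mul, mul_smul_comm, smul_mul_assoc, h]

/-- in the twisted group algebra `ℂ[Γ̄]`, with 1-based pairs
`(2j−1, 2j)` corresponding to 0-based indices `(2k, 2k+1)`:
`e^{\overline{ε_{2j-1} − ε_{2j}}} w(ρ) = −i ρ_{2j-1} ρ_{2j} w(ρ)` (so `w(ρ)` is
an eigenvector with eigenvalue `−i ρ_{2j-1} ρ_{2j}`), and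
`e^{\overline{ε_{2j} − ε_{2j+1}}} w(ρ) = −i ρ_{2j} ρ_{2j+1} w(ρ')` where `ρ'`
flips the signs of the entries `ρ_{2j}, ρ_{2j+1}`. -/
theorem stmt14 (ν k : ℕ) (A : Type) [Ring A] [Algebra ℂ A]
    (e : (Fin ν → ZMod 2) → A)
    (hone : e 0 = 1)
    (hmul : ∀ α β : Fin ν → ℤ,
      e (fun i => (α i : ZMod 2)) * e (fun i => (β i : ZMod 2))
        = eps ν α β • e (fun i => ((α i + β i : ℤ) : ZMod 2)))
    (ρ : Fin ν → ℂ) (hρ : ∀ j, ρ j = 1 ∨ ρ j = -1)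
    (h1 : 2 * k + 1 < ν) :
    (e (fun i => if i = (⟨2 * k, by omega⟩ : Fin ν)
          ∨ i = (⟨2 * k + 1, by omega⟩ : Fin ν) then 1 else 0)
        * wprod ν A e ρ
      = (-Complex.I * ρ ⟨2 * k, by omega⟩ * ρ ⟨2 * k + 1, by omega⟩) •
          wprod ν A e ρ) ∧
    (∀ h2 : 2 * k + 2 < ν,
      e (fun i => if i = (⟨2 * k + 1, by omega⟩ : Fin ν)
            ∨ i = (⟨2 * k + 2, by omega⟩ : Fin ν) then 1 else 0)
          * wprod ν A e ρ
        = (-Complex.I * ρ ⟨2 * k + 1, by omega⟩ * ρ ⟨2 * k + 2, by omega⟩) •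
            wprod ν A e (fun i =>
              if i = (⟨2 * k + 1, by omega⟩ : Fin ν)
                ∨ i = (⟨2 * k + 2, by omega⟩ : Fin ν) then -ρ i else ρ i)) := by

  have hsq : ∀ j : Fin ν, ρ j * ρ j = 1 := by
    intro j; rcases hρ j with h | h <;> rw [h] <;> norm_num
  constructor
  · -- Part 1
    obtain ⟨m, rfl⟩ : ∃ m, ν = 2 * k + 2 + m := ⟨ν - (2 * k + 2), by omega⟩
    have hne : (⟨2 * k, by omega⟩ : Fin (2 * k + 2 + m)) ≠ ⟨2 * k + 1, by omega⟩ :=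
      Fin.ne_of_val_ne (show 2 * k ≠ 2 * k + 1 by omega)
    have hx := e_sq e hone hmul (⟨2 * k, by omega⟩ : Fin (2 * k + 2 + m))
    have hy := e_sq e hone hmul (⟨2 * k + 1, by omega⟩ : Fin (2 * k + 2 + m))
    have hyx := e_anticomm e hmul _ _ hne
    have hg : e (uvec (2 * k + 2 + m) ⟨2 * k, by omega⟩)
          * e (uvec (2 * k + 2 + m) ⟨2 * k + 1, by omega⟩)
        = e (fun i => if i = (⟨2 * k, by omega⟩ : Fin (2 * k + 2 + m))
            ∨ i = (⟨2 * k + 1, by omega⟩ : Fin (2 * k + 2 + m)) then 1 else 0) := by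
      rw [e_mul_e e hmul, if_pos (Fin.mk_le_mk.mpr (by omega)), one_smul]
      congr 1; funext i
      simp only [uvec]
      by_cases hia : i = (⟨2 * k, by omega⟩ : Fin (2 * k + 2 + m)) <;>
        by_cases hib : i = (⟨2 * k + 1, by omega⟩ : Fin (2 * k + 2 + m))
      · exact absurd (hia ▸ hib) hne
      · simp [hia, hib]
      · simp [hia, hib]
      · simp [hia, hib]
    rw [← hg]
    refine key' (2 * k) m A e _ ρ ρ _ ?_ (fun _ _ _ => rfl) ?_
    · intro j hj1 hj2 r
      refine comm_wfac e _ j r ?_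
      exact comm_aux _ _ _
        (e_anticomm e hmul j ⟨2 * k, by omega⟩ (fun h => hj1 (by rw [h])))
        (e_anticomm e hmul j ⟨2 * k + 1, by omega⟩ (fun h => hj2 (by rw [h])))
    · have hwa : ∀ r : ℂ, wfac (2 * k + 2 + m) A e ⟨2 * k, by omega⟩ r
          = 1 + (Complex.I * r) • e (uvec (2 * k + 2 + m) ⟨2 * k, by omega⟩) := by
        intro r; unfold wfac; rw [if_pos (show (2 * k) % 2 = 0 by omega)]
      have hwb : ∀ r : ℂ, wfac (2 * k + 2 + m) A e ⟨2 * k + 1, by omega⟩ r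
          = 1 + r • e (uvec (2 * k + 2 + m) ⟨2 * k + 1, by omega⟩) := by
        intro r; unfold wfac; rw [if_neg (show ¬ (2 * k + 1) % 2 = 0 by omega)]
      rw [hwa, hwb]
      exact pair1 _ _ hx hy hyx _ _ (hsq _) (hsq _)
  · -- Part 2
    intro h2
    obtain ⟨m, rfl⟩ : ∃ m, ν = 2 * k + 1 + 2 + m := ⟨ν - (2 * k + 3), by omega⟩
    have hne : (⟨2 * k + 1, by omega⟩ : Fin (2 * k + 1 + 2 + m)) ≠ ⟨2 * k + 2, by omega⟩ :=
      Fin.ne_of_val_ne (show 2 * k + 1 ≠ 2 * k + 2 by omega)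
    have hx := e_sq e hone hmul (⟨2 * k + 1, by omega⟩ : Fin (2 * k + 1 + 2 + m))
    have hy := e_sq e hone hmul (⟨2 * k + 2, by omega⟩ : Fin (2 * k + 1 + 2 + m))
    have hyx := e_anticomm e hmul _ _ hne
    have hg : e (uvec (2 * k + 1 + 2 + m) ⟨2 * k + 1, by omega⟩)
          * e (uvec (2 * k + 1 + 2 + m) ⟨2 * k + 2, by omega⟩)
        = e (fun i => if i = (⟨2 * k + 1, by omega⟩ : Fin (2 * k + 1 + 2 + m))
            ∨ i = (⟨2 * k + 2, by omega⟩ : Fin (2 * k + 1 + 2 + m)) then 1 else 0) := by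
      rw [e_mul_e e hmul, if_pos (Fin.mk_le_mk.mpr (by omega)), one_smul]
      congr 1; funext i
      simp only [uvec]
      by_cases hia : i = (⟨2 * k + 1, by omega⟩ : Fin (2 * k + 1 + 2 + m)) <;>
        by_cases hib : i = (⟨2 * k + 2, by omega⟩ : Fin (2 * k + 1 + 2 + m))
      · exact absurd (hia ▸ hib) hne
      · simp [hia, hib]
      · simp [hia, hib]
      · simp [hia, hib]
    rw [← hg]
    refine key' (2 * k + 1) m A e _ ρ _ _ ?_ ?_ ?_
    · intro j hj1 hj2 r
      refine comm_wfac e _ j r ?_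
      exact comm_aux _ _ _
        (e_anticomm e hmul j ⟨2 * k + 1, by omega⟩ (fun h => hj1 (by rw [h])))
        (e_anticomm e hmul j ⟨2 * k + 2, by omega⟩ (fun h => hj2 (by rw [h])))
    · intro j hj1 hj2
      rw [if_neg]
      rw [not_or]
      exact ⟨fun h => hj1 (by rw [h]), fun h => hj2 (by rw [h])⟩
    · have hwa : ∀ r : ℂ, wfac (2 * k + 1 + 2 + m) A e ⟨2 * k + 1, by omega⟩ r
          = 1 + r • e (uvec (2 * k + 1 + 2 + m) ⟨2 * k + 1, by omega⟩) := by
        intro r; unfold wfac; rw [if_neg (show ¬ (2 * k + 1) % 2 = 0 by omega)]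
      have hwb : ∀ r : ℂ, wfac (2 * k + 1 + 2 + m) A e ⟨2 * k + 2, by omega⟩ r
          = 1 + (Complex.I * r) • e (uvec (2 * k + 1 + 2 + m) ⟨2 * k + 2, by omega⟩) := by
        intro r; unfold wfac; rw [if_pos (show (2 * k + 2) % 2 = 0 by omega)]
      rw [hwa, hwb, hwa, hwb]
      simp only [eq_self_iff_true, true_or, or_true, if_true]
      exact pair2 _ _ hx hy hyx _ _ (hsq _) (hsq _)
end
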